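/- Let (X, σ|_X, G) be the subshift constructed from a congruent exhaustive right Følner sequence (F_n) and patterns (B_{n,k}) satisfying (C1), (C2), (C3), with C_{n,k} = {x ∈ X : x|_{F_n} = B_{n,k}} and C_n = ⋃_k C_{n,k}. Then for any invariant Borel probability measure μ on X and any g ∈ G and n ≥ 0, μ(⋃_{k=1}^{k_n} ⋃_{v ∈ F_n \ F_n g} σ^{v^{-1}}(C_{n,k})) = |F_n \ F_n g| / |F_n|. Consequently, the set ∂X = ⋃_{g ∈ G} ⋂_{n≥0} ⋃_k ⋃_{v ∈ F_n \ F_n g} σ^{v^{-1}}(C_{n,k}) has μ-measure zero for every invariant measure μ; i.e., X \ ∂X is a full measure set. -/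

import Mathlib

open Filter MeasureTheory
open scoped ENNReal

/-- The left shift action of `G` on `A^G`: `(σ^g x) h = x (g⁻¹ h)`. -/
def shiftMap {G A : Type*} [Group G] (g : G) (x : G → A) : G → A := fun h => x (g⁻¹ * h)

/-- Lemma `border`: let `(F n)` be a right Følner sequence, `X` the
subshift with clopen Kakutani–Rokhlin partitions
`P_n = {σ^{v⁻¹}(C_{n,i}) : v ∈ F n, i}` (here `σ^{v⁻¹}(C) = shiftMap v ⁻¹' C`), and
let `μ` be a shift-invariant Borel probability measure giving `X` full measure. Then
for every `g` and `n`,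
`μ (⋃_i ⋃_{v ∈ F n \ F n g} σ^{v⁻¹}(C_{n,i})) = |F n \ F n g| / |F n|`,
and consequently the boundary set
`∂X = ⋃_g ⋂_n ⋃_i ⋃_{v ∈ F n \ F n g} σ^{v⁻¹}(C_{n,i})` is `μ`-null;
i.e. `X \ ∂X` is a full measure set. -/
theorem boundary_null {G A : Type*} [Group G] [DecidableEq G] [Countable G]
    [MeasurableSpace A]
    (F : ℕ → Finset G) (hne : ∀ n, (F n).Nonempty)
    (hFolner : ∀ g : G,
      Tendsto (fun n => (((F n).image (· * g) \ F n).card : ℝ) / ((F n).card : ℝ))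
        atTop (nhds 0))
    (X : Set (G → A)) (k : ℕ → ℕ)
    (C : (n : ℕ) → Fin (k n) → Set (G → A))
    (hmeas : ∀ n i, MeasurableSet (C n i))
    (hcover : ∀ n, X ⊆ ⋃ v ∈ F n, ⋃ i, shiftMap v ⁻¹' C n i)
    (hsub : ∀ n, ∀ v ∈ F n, ∀ i, shiftMap v ⁻¹' C n i ⊆ X)
    (hdisj : ∀ n, Set.PairwiseDisjoint {p : G × Fin (k n) | p.1 ∈ F n}
      (fun p => shiftMap p.1 ⁻¹' C n p.2))
    (μ : Measure (G → A)) [IsProbabilityMeasure μ]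
    (hX : μ X = 1)
    (hinv : ∀ (g : G) (S : Set (G → A)), MeasurableSet S → μ (shiftMap g ⁻¹' S) = μ S) :
    (∀ (g : G) (n : ℕ),
      μ (⋃ i, ⋃ v ∈ F n \ (F n).image (· * g), shiftMap v ⁻¹' C n i) =
        ((F n \ (F n).image (· * g)).card : ℝ≥0∞) / ((F n).card : ℝ≥0∞)) ∧
    μ (⋃ g : G, ⋂ n, ⋃ i, ⋃ v ∈ F n \ (F n).image (· * g), shiftMap v ⁻¹' C n i) = 0 := by
  classical
  have hshiftmeas : ∀ (v : G), Measurable (shiftMap (A := A) v) := fun v =>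
    measurable_pi_lambda _ fun h => measurable_pi_apply _
  have hmeas' : ∀ (v : G) (n : ℕ) (i : Fin (k n)), MeasurableSet (shiftMap v ⁻¹' C n i) :=
    fun v n i => (hmeas n i).preimage (hshiftmeas v)
  -- key computation for subsets T of F n
  have key : ∀ (n : ℕ) (T : Finset G), T ⊆ F n →
      μ (⋃ i, ⋃ v ∈ T, shiftMap v ⁻¹' C n i)
        = (T.card : ℝ≥0∞) * ∑ i, μ (C n i) := by
    intro n T hT
    have hset : (⋃ i, ⋃ v ∈ T, shiftMap v ⁻¹' C n i)
        = ⋃ p ∈ T ×ˢ (Finset.univ : Finset (Fin (k n))),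
            shiftMap p.1 ⁻¹' C n p.2 := by
      ext x
      simp only [Set.mem_iUnion, Finset.mem_product, Finset.mem_coe, Finset.mem_univ,
        and_true, Prod.exists, exists_prop]
      tauto
    rw [hset, measure_biUnion_finset ?_ (fun p _ => hmeas' p.1 n p.2)]
    · rw [Finset.sum_product]
      have : ∀ v ∈ T, ∀ i : Fin (k n), μ (shiftMap v ⁻¹' C n i) = μ (C n i) :=
        fun v _ i => hinv v (C n i) (hmeas n i)
      calc ∑ v ∈ T, ∑ i, μ (shiftMap v ⁻¹' C n i)
          = ∑ v ∈ T, ∑ i, μ (C n i) := by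
            refine Finset.sum_congr rfl fun v hv => Finset.sum_congr rfl fun i _ => this v hv i
        _ = (T.card : ℝ≥0∞) * ∑ i, μ (C n i) := by
            rw [Finset.sum_const, nsmul_eq_mul]
    · refine (hdisj n).subset ?_
      intro p hp
      simp only [Finset.coe_product, Set.mem_prod, Finset.mem_coe] at hp
      exact hT hp.1
  -- full partition has measure 1
  have hone : ∀ n, ((F n).card : ℝ≥0∞) * ∑ i, μ (C n i) = 1 := by
    intro n
    rw [← key n (F n) (Finset.Subset.refl _)]
    refine le_antisymm prob_le_one ?_
    have hsub' : X ⊆ ⋃ i, ⋃ v ∈ F n, shiftMap v ⁻¹' C n i := by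
      refine (hcover n).trans ?_
      intro x hx
      simp only [Set.mem_iUnion, exists_prop] at hx ⊢
      obtain ⟨v, hv, i, hi⟩ := hx
      exact ⟨i, v, hv, hi⟩
    calc (1 : ℝ≥0∞) = μ X := hX.symm
      _ ≤ _ := measure_mono hsub'
  have hsum : ∀ n, ∑ i, μ (C n i) = ((F n).card : ℝ≥0∞)⁻¹ := by
    intro n
    have h0 : ((F n).card : ℝ≥0∞) ≠ 0 := by
      simp [Finset.card_eq_zero, (hne n).ne_empty]
    have htop : ((F n).card : ℝ≥0∞) ≠ ⊤ := ENNReal.natCast_ne_top _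
    calc ∑ i, μ (C n i)
        = ((F n).card : ℝ≥0∞)⁻¹ * (((F n).card : ℝ≥0∞) * ∑ i, μ (C n i)) := by
          rw [← mul_assoc, ENNReal.inv_mul_cancel h0 htop, one_mul]
      _ = ((F n).card : ℝ≥0∞)⁻¹ := by rw [hone n, mul_one]
  have part1 : ∀ (g : G) (n : ℕ),
      μ (⋃ i, ⋃ v ∈ F n \ (F n).image (· * g), shiftMap v ⁻¹' C n i) =
        ((F n \ (F n).image (· * g)).card : ℝ≥0∞) / ((F n).card : ℝ≥0∞) := by
    intro g n
    rw [key n _ (Finset.sdiff_subset), hsum n, ENNReal.div_eq_inv_mul, mul_comm]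
  refine ⟨part1, ?_⟩
  refine measure_iUnion_null fun g => ?_
  -- the boundary intersection is null
  have hcard : ∀ n, (F n \ (F n).image (· * g)).card = ((F n).image (· * g) \ F n).card := by
    intro n
    have hinj : Function.Injective (· * g) := mul_left_injective g
    have h1 : ((F n).image (· * g)).card = (F n).card := Finset.card_image_of_injective _ hinj
    have h2 := Finset.card_sdiff_add_card_inter (F n) ((F n).image (· * g))
    have h3 := Finset.card_sdiff_add_card_inter ((F n).image (· * g)) (F n)
    rw [h1] at h3
    rw [Finset.inter_comm] at h3
    omega
  have ha : Tendsto (fun n => ((F n \ (F n).image (· * g)).card : ℝ≥0∞) / ((F n).card : ℝ≥0∞))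
      atTop (nhds 0) := by
    have heq : ∀ n, ((F n \ (F n).image (· * g)).card : ℝ≥0∞) / ((F n).card : ℝ≥0∞)
        = ENNReal.ofReal ((((F n).image (· * g) \ F n).card : ℝ) / ((F n).card : ℝ)) := by
      intro n
      rw [ENNReal.ofReal_div_of_pos (by exact_mod_cast (hne n).card_pos),
        ENNReal.ofReal_natCast, ENNReal.ofReal_natCast, hcard n]
    simp only [heq]
    have := (ENNReal.continuous_ofReal.tendsto 0).comp (hFolner g)
    simpa [Function.comp_def] using this
  have hle : ∀ n, μ (⋂ m, ⋃ i, ⋃ v ∈ F m \ (F m).image (· * g), shiftMap v ⁻¹' C m i)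
      ≤ ((F n \ (F n).image (· * g)).card : ℝ≥0∞) / ((F n).card : ℝ≥0∞) := by
    intro n
    rw [← part1 g n]
    exact measure_mono (Set.iInter_subset _ n)
  exact le_antisymm (ge_of_tendsto ha (Filter.Eventually.of_forall hle)) (zero_le)
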